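/- arXiv:math/0604133 — 2 statements merged into one kernel-verified Lean document; each statement's English description precedes it below -/
import Mathlib

section
/- The set 𝒟_n is closed under addition: for all D, D' ∈ 𝒟_n, the set D + D' again belongs to 𝒟_n; that is, D + D' is finite and whenever d ∈ D + D' and d_i ≠ 0, then d − e_i ∈ D + D'. -/
/-- `D ∈ 𝒟ₙ`: a finite set `D ⊆ ℕ₀ⁿ` (given as a `Finset`) such that whenever `d ∈ D`
and `dᵢ ≠ 0`, then `d − eᵢ ∈ D`. -/
def IsDset {n : ℕ} (D : Finset (Fin n → ℕ)) : Prop :=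
  ∀ d ∈ D, ∀ i : Fin n, d i ≠ 0 → d - Pi.single i 1 ∈ D

/-- `#(p̂⁻¹(dh) ∩ D)`: the number of elements of `D` in the fiber over `dh` of the
projection `p̂` forgetting the first coordinate. -/
def fiberCard {n : ℕ} (D : Finset (Fin (n + 1) → ℕ)) (dh : Fin n → ℕ) : ℕ :=
  (D.filter (fun d => Fin.tail d = dh)).card

/-- The addition `D + D'` on `𝒟ₙ`: the set of all `d ∈ ℕ₀ⁿ` such that
`p̂(d) ∈ p̂(D) ∪ p̂(D')` and `d₁ < #(p̂⁻¹(p̂ d) ∩ D) + #(p̂⁻¹(p̂ d) ∩ D')`,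
realized as a `Finset`: for each `dh ∈ p̂(D) ∪ p̂(D')` it collects the tuples with tail
`dh` and first coordinate `< fiberCard D dh + fiberCard D' dh`; so `d ∈ addD D D'` iff
`Fin.tail d ∈ p̂(D) ∪ p̂(D')` and `d 0 < fiberCard D (Fin.tail d) + fiberCard D' (Fin.tail d)`. -/
def addD {n : ℕ} (D D' : Finset (Fin (n + 1) → ℕ)) : Finset (Fin (n + 1) → ℕ) :=
  (D.image (fun d => Fin.tail d) ∪ D'.image (fun d => Fin.tail d)).biUnion
    (fun dh => (Finset.range (fiberCard D dh + fiberCard D' dh)).image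
      (fun j => Fin.cons j dh))

lemma fiberCard_pos_iff {n : ℕ} (D : Finset (Fin (n+1) → ℕ)) (dh : Fin n → ℕ) :
    dh ∈ D.image (fun d => Fin.tail d) ↔ 0 < fiberCard D dh := by
  simp [fiberCard, Finset.card_pos, Finset.filter_nonempty_iff]

lemma mem_addD {n : ℕ} (D D' : Finset (Fin (n+1) → ℕ)) (d : Fin (n+1) → ℕ) :
    d ∈ addD D D' ↔ d 0 < fiberCard D (Fin.tail d) + fiberCard D' (Fin.tail d) := by
  constructor
  · intro h
    rw [addD, Finset.mem_biUnion] at h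
    obtain ⟨dh, _, h2⟩ := h
    rw [Finset.mem_image] at h2
    obtain ⟨j, hj, rfl⟩ := h2
    simpa [Fin.tail_cons] using Finset.mem_range.mp hj
  · intro h
    rw [addD, Finset.mem_biUnion]
    refine ⟨Fin.tail d, ?_, ?_⟩
    · rw [Finset.mem_union, fiberCard_pos_iff, fiberCard_pos_iff]
      omega
    · rw [Finset.mem_image]
      exact ⟨d 0, Finset.mem_range.mpr h, Fin.cons_self_tail d⟩

lemma single_succ {n : ℕ} (j k : Fin n) :
    (Pi.single j.succ 1 : Fin (n+1) → ℕ) k.succ = (Pi.single j 1 : Fin n → ℕ) k := by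
  rcases eq_or_ne k j with rfl | h
  · simp
  · rw [Pi.single_eq_of_ne (fun e => h (Fin.succ_injective _ e)), Pi.single_eq_of_ne h]

lemma fiberCard_le {n : ℕ} {D : Finset (Fin (n+1) → ℕ)} (hD : IsDset D)
    (dh : Fin n → ℕ) (j : Fin n) (hj : dh j ≠ 0) :
    fiberCard D dh ≤ fiberCard D (dh - Pi.single j 1) := by
  apply Finset.card_le_card_of_injOn (fun d => d - Pi.single j.succ 1)
  · intro d hd
    rw [Finset.mem_coe, Finset.mem_filter] at hd ⊢
    obtain ⟨hdD, hdt⟩ := hd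
    have hdj : d j.succ ≠ 0 := by
      rw [show d j.succ = dh j from congrFun hdt j]; exact hj
    refine ⟨hD d hdD j.succ hdj, ?_⟩
    funext k
    have := congrFun hdt k
    simp only [Fin.tail, Pi.sub_apply] at this ⊢
    rw [single_succ, this]
  · intro a ha b hb hab
    simp only [Finset.mem_coe, Finset.mem_filter] at ha hb
    have haj : a j.succ = dh j := congrFun ha.2 j
    have hbj : b j.succ = dh j := congrFun hb.2 j
    funext k
    have := congrFun hab k
    simp only [Pi.sub_apply] at this
    rcases eq_or_ne k j.succ with rfl | h
    · rw [haj, hbj]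
    · simpa [Pi.single_eq_of_ne h] using this

/-- Proposition (c): `𝒟ₙ` is closed under addition: for `D, D' ∈ 𝒟ₙ`, the (automatically
finite) set `D + D'` again lies in `𝒟ₙ`, i.e. whenever `d ∈ D + D'` and `dᵢ ≠ 0`, then
`d − eᵢ ∈ D + D'`. -/
theorem stmt_8 {n : ℕ} (D D' : Finset (Fin (n + 1) → ℕ))
    (hD : IsDset D) (hD' : IsDset D') :
    IsDset (addD D D') := by
  intro d hd i hi
  rw [mem_addD] at hd ⊢
  rcases Fin.eq_zero_or_eq_succ i with rfl | ⟨j, rfl⟩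
  · have ht : Fin.tail (d - Pi.single 0 1) = Fin.tail d := by
      funext k
      simp [Fin.tail, Pi.single_eq_of_ne (Fin.succ_ne_zero k)]
    rw [ht]
    have : (d - Pi.single 0 1 : Fin (n+1) → ℕ) 0 = d 0 - 1 := by simp
    omega
  · have hj : Fin.tail d j ≠ 0 := hi
    have ht : Fin.tail (d - Pi.single j.succ 1) = Fin.tail d - Pi.single j 1 := by
      funext k
      simp only [Fin.tail, Pi.sub_apply]
      rw [single_succ]
    have h0 : (d - Pi.single j.succ 1 : Fin (n+1) → ℕ) 0 = d 0 := by
      simp [Pi.single_eq_of_ne (Ne.symm (Fin.succ_ne_zero j))]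
    rw [ht, h0]
    have h1 := fiberCard_le hD (Fin.tail d) j hj
    have h2 := fiberCard_le hD' (Fin.tail d) j hj
    omega
end

section
/- Let k be a field and A a finite set of points of k^n. Then for every β ∈ ℕ₀^n − D(A) there exists a unique polynomial f_β ∈ k[X_1,…,X_n] such that: (i) the leading term of f_β in the lexicographic ordering (with X_1 < X_2 < … < X_n) is X^β; (ii) the exponents of all lower terms of f_β lie in D(A); and (iii) f_β(a) = 0 for all a ∈ A. -/
variable {k : Type*} [Field k] [DecidableEq k]

/-- The set `D(A) ⊆ ℕ₀ⁿ` attached to a finite set of points `A ⊆ kⁿ`, defined by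
induction on `n`.  For `n = 0`, `D(A)` is empty if `A` is and the single point of `ℕ₀⁰`
otherwise (so that for `n = 1` one gets `D(A) = {0, 1, …, #A − 1}`).  For `n + 1`:
writing `p(A)` for the set of first coordinates of `A` and
`H a₁ = p⁻¹(a₁) ∩ A ⊆ kⁿ` (via the projection `Fin.tail` forgetting the first
coordinate), `D(A) = Σ_{a₁ ∈ p(A)} D(H a₁)`, the sum with respect to the addition `+`
on `𝒟`; spelled out via the closed formula for such sums, `d ∈ D(A)` iff
`Fin.tail d ∈ ⋃_{a₁ ∈ p(A)} D(H a₁)` and `d 0 < #{a₁ ∈ p(A) : Fin.tail d ∈ D(H a₁)}`. -/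
def DofA : (n : ℕ) → Finset (Fin n → k) → Finset (Fin n → ℕ)
  | 0, A => A.image (fun _ => (fun _ => 0))
  | (n + 1), A =>
      ((A.image (fun a => a 0)).biUnion
          (fun a1 => DofA n ((A.filter (fun a => a 0 = a1)).image (fun a => Fin.tail a)))).biUnion
        (fun dh =>
          (Finset.range
              (((A.image (fun a => a 0)).filter
                  (fun a1 =>
                    dh ∈ DofA n ((A.filter (fun a => a 0 = a1)).image (fun a => Fin.tail a)))).card)).image
            (fun j => Fin.cons j dh))


/-- The strict lexicographic order on exponent vectors corresponding to the
lexicographic monomial ordering with `X₁ < X₂ < … < Xₙ`: the exponents of the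
variables with *larger* index are compared first. -/
def lexLt {n : ℕ} (α β : Fin n → ℕ) : Prop :=
  ∃ i : Fin n, α i < β i ∧ ∀ j : Fin n, i < j → α j = β j

/-- The (non-strict) lexicographic order corresponding to `X₁ < X₂ < … < Xₙ`. -/
def lexLe {n : ℕ} (α β : Fin n → ℕ) : Prop :=
  lexLt α β ∨ α = β

/-- Membership in the limiting set `E(D)`: `β ∉ D` and whenever `βᵢ ≠ 0`,
then `β − eᵢ ∈ D`. -/
def inE {n : ℕ} (D : Finset (Fin n → ℕ)) (β : Fin n → ℕ) : Prop :=
  β ∉ D ∧ ∀ i : Fin n, β i ≠ 0 → β - Pi.single i 1 ∈ D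

/-- The coefficient of the monomial `X^α` in the multivariate polynomial `f`,
with the exponent given as a function `Fin n → ℕ`. -/
noncomputable def coeffv {n : ℕ} {R : Type*} [CommSemiring R]
    (f : MvPolynomial (Fin n) R) (α : Fin n → ℕ) : R :=
  MvPolynomial.coeff (Finsupp.equivFunOnFinite.symm α) f

section LexLemmas

theorem lexLt_irrefl {n : ℕ} (α : Fin n → ℕ) : ¬ lexLt α α := by
  rintro ⟨i, hi, -⟩; exact lt_irrefl _ hi

theorem lexLt_trans {n : ℕ} {α β γ : Fin n → ℕ} (h1 : lexLt α β) (h2 : lexLt β γ) :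
    lexLt α γ := by
  obtain ⟨i1, hi1, he1⟩ := h1
  obtain ⟨i2, hi2, he2⟩ := h2
  rcases lt_trichotomy i1 i2 with h | h | h
  · exact ⟨i2, by rw [he1 i2 h]; exact hi2, fun j hj => (he1 j (h.trans hj)).trans (he2 j hj)⟩
  · exact ⟨i1, by subst h; exact hi1.trans hi2, fun j hj => (he1 j hj).trans (he2 j (h ▸ hj))⟩
  · exact ⟨i1, by rw [he2 i1 h] at hi1; exact hi1, fun j hj => (he1 j hj).trans (he2 j (h.trans hj))⟩

theorem lexLt_trichotomy {n : ℕ} {α β : Fin n → ℕ} (h : α ≠ β) : lexLt α β ∨ lexLt β α := by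
  classical
  have hs : (Finset.univ.filter (fun i : Fin n => α i ≠ β i)).Nonempty := by
    by_contra hc
    rw [Finset.not_nonempty_iff_eq_empty] at hc
    refine h (funext fun i => ?_)
    by_contra hi
    have : i ∈ Finset.univ.filter (fun i : Fin n => α i ≠ β i) := by simp [hi]
    simp [hc] at this
  set s := Finset.univ.filter (fun i : Fin n => α i ≠ β i)
  have his : s.max' hs ∈ s := s.max'_mem hs
  have hmax : ∀ j ∈ s, j ≤ s.max' hs := fun j hj => Finset.le_max' s j hj
  set i := s.max' hs
  have heq : ∀ j, i < j → α j = β j := by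
    intro j hj
    by_contra hc
    exact absurd (hmax j (by simp [s, hc])) (not_le.2 hj)
  have hne : α i ≠ β i := by simpa [s] using his
  rcases lt_or_gt_of_ne hne with h' | h'
  · exact Or.inl ⟨i, h', heq⟩
  · exact Or.inr ⟨i, h', fun j hj => (heq j hj).symm⟩

theorem lexLt_cons_iff {n : ℕ} {δ γ : Fin n → ℕ} {j j' : ℕ} :
    lexLt (Fin.cons j δ) (Fin.cons j' γ) ↔ lexLt δ γ ∨ (δ = γ ∧ j < j') := by
  constructor
  · rintro ⟨i, hi, he⟩
    induction i using Fin.cases with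
    | zero =>
        refine Or.inr ⟨funext fun l => ?_, by simpa using hi⟩
        have := he l.succ (Fin.succ_pos l)
        simpa using this
    | succ i' =>
        refine Or.inl ⟨i', by simpa using hi, fun l hl => ?_⟩
        have := he l.succ (by simpa using hl)
        simpa using this
  · rintro (⟨i, hi, he⟩ | ⟨rfl, hj⟩)
    · refine ⟨i.succ, by simpa using hi, fun l hl => ?_⟩
      induction l using Fin.cases with
      | zero => exact absurd hl (by simp [Fin.lt_def])
      | succ l' => simpa using he l' (by simpa using hl)
    · exact ⟨0, by simpa using hj, fun l hl => by
        induction l using Fin.cases with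
        | zero => exact absurd hl (lt_irrefl _)
        | succ l' => simp⟩

theorem lexLt_wf (n : ℕ) : WellFounded (@lexLt n) := by
  induction n with
  | zero =>
      constructor
      intro a
      constructor
      rintro b ⟨i, -⟩
      exact i.elim0
  | succ n ih =>
      have hsub : ∀ (a b : Fin (n+1) → ℕ), lexLt a b →
          Prod.Lex lexLt Nat.lt ((Fin.tail a, a 0) : (Fin n → ℕ) × ℕ) (Fin.tail b, b 0) := by
        intro a b hab
        rw [← Fin.cons_self_tail a, ← Fin.cons_self_tail b, lexLt_cons_iff] at hab
        rcases hab with h | ⟨h, h'⟩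
        · exact Prod.Lex.left _ _ h
        · rw [h]; exact Prod.Lex.right _ h'
      exact Subrelation.wf (fun {a b} h => hsub a b h)
        (InvImage.wf (fun d : Fin (n+1) → ℕ => ((Fin.tail d, d 0) : (Fin n → ℕ) × ℕ))
          (WellFounded.prod_lex ih (Nat.lt_wfRel.wf)))

theorem exists_lex_max {n : ℕ} (s : Finset (Fin n → ℕ)) (hs : s.Nonempty) :
    ∃ δ ∈ s, ∀ δ' ∈ s, δ' = δ ∨ lexLt δ' δ := by
  classical
  induction s using Finset.induction_on with
  | empty => exact absurd hs (by simp)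
  | @insert a s' ha ih =>
      rcases s'.eq_empty_or_nonempty with rfl | hs'
      · exact ⟨a, by simp, by simp⟩
      · obtain ⟨δ, hδs, hδmax⟩ := ih hs'
        by_cases haδ : a = δ
        · exact ⟨δ, Finset.mem_insert_of_mem hδs, fun δ' hδ' => by
            rcases Finset.mem_insert.1 hδ' with rfl | h
            · exact Or.inl haδ
            · exact hδmax δ' h⟩
        · rcases lexLt_trichotomy haδ with h | h
          · exact ⟨δ, Finset.mem_insert_of_mem hδs, fun δ' hδ' => by
              rcases Finset.mem_insert.1 hδ' with rfl | hm
              · exact Or.inr h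
              · exact hδmax δ' hm⟩
          · refine ⟨a, Finset.mem_insert_self a s', fun δ' hδ' => ?_⟩
            rcases Finset.mem_insert.1 hδ' with rfl | hm
            · exact Or.inl rfl
            · rcases hδmax δ' hm with rfl | h'
              · exact Or.inr h
              · exact Or.inr (lexLt_trans h' h)

end LexLemmas

section CoeffvLemmas

theorem coeffv_coe {n : ℕ} {R : Type*} [CommSemiring R] (f : MvPolynomial (Fin n) R)
    (m : Fin n →₀ ℕ) : coeffv f (m : Fin n → ℕ) = MvPolynomial.coeff m f := by
  rw [coeffv, Finsupp.equivFunOnFinite_symm_coe]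

theorem symm_apply_coeffv {n : ℕ} (α : Fin n → ℕ) (l : Fin n) :
    (Finsupp.equivFunOnFinite.symm α : Fin n →₀ ℕ) l = α l := rfl

theorem finsupp_symm_cons {n : ℕ} (j : ℕ) (dh : Fin n → ℕ) :
    (Finsupp.equivFunOnFinite.symm (Fin.cons j dh) : Fin (n+1) →₀ ℕ)
      = Finsupp.cons j (Finsupp.equivFunOnFinite.symm dh) := by
  ext l
  induction l using Fin.cases with
  | zero => rw [symm_apply_coeffv]; simp
  | succ l' => rw [symm_apply_coeffv]; simp [symm_apply_coeffv]

theorem coeffv_cons {n : ℕ} {R : Type*} [CommSemiring R] (f : MvPolynomial (Fin (n+1)) R)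
    (j : ℕ) (dh : Fin n → ℕ) :
    coeffv f (Fin.cons j dh) = coeffv ((MvPolynomial.finSuccEquiv R n f).coeff j) dh := by
  rw [coeffv, coeffv, MvPolynomial.finSuccEquiv_coeff_coeff, finsupp_symm_cons]

theorem coeffv_add {n : ℕ} {R : Type*} [CommSemiring R] (f g : MvPolynomial (Fin n) R)
    (α : Fin n → ℕ) : coeffv (f + g) α = coeffv f α + coeffv g α := by
  simp [coeffv, MvPolynomial.coeff_add]

theorem coeffv_sub {n : ℕ} {R : Type*} [CommRing R] (f g : MvPolynomial (Fin n) R)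
    (α : Fin n → ℕ) : coeffv (f - g) α = coeffv f α - coeffv g α := by
  simp [coeffv, MvPolynomial.coeff_sub]

theorem coeffv_sum {n : ℕ} {R : Type*} [CommSemiring R] {X : Type*} (s : Finset X)
    (f : X → MvPolynomial (Fin n) R) (α : Fin n → ℕ) :
    coeffv (∑ x ∈ s, f x) α = ∑ x ∈ s, coeffv (f x) α := by
  simp [coeffv, MvPolynomial.coeff_sum]

theorem coeffv_monomial {n : ℕ} {R : Type*} [CommSemiring R] (γ α : Fin n → ℕ) (c : R) :
    coeffv (MvPolynomial.monomial (Finsupp.equivFunOnFinite.symm γ) c) α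
      = if γ = α then c else 0 := by
  rw [coeffv, MvPolynomial.coeff_monomial]
  congr 1
  simp only [eq_iff_iff]
  exact ⟨fun h => by simpa using congrArg (⇑Finsupp.equivFunOnFinite) h,
    fun h => congrArg _ h⟩

theorem coeffv_C_mul {n : ℕ} {R : Type*} [CommSemiring R] (c : R) (p : MvPolynomial (Fin n) R)
    (α : Fin n → ℕ) : coeffv (MvPolynomial.C c * p) α = c * coeffv p α := by
  simp [coeffv, MvPolynomial.coeff_C_mul]

end CoeffvLemmas

section DofALemmas

theorem mem_DofA_succ {n : ℕ} (A : Finset (Fin (n+1) → k)) (δ : Fin (n+1) → ℕ) :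
    δ ∈ DofA (n+1) A ↔ δ 0 <
      ((A.image (fun a => a 0)).filter
        (fun a1 => Fin.tail δ ∈
          DofA n ((A.filter (fun a => a 0 = a1)).image (fun a => Fin.tail a)))).card := by
  constructor
  · intro h
    rw [DofA] at h
    simp only [Finset.mem_biUnion, Finset.mem_image, Finset.mem_range] at h
    obtain ⟨dh, hdh, j, hj, hcons⟩ := h
    have h0 : δ 0 = j := by rw [← hcons]; simp
    have ht : Fin.tail δ = dh := by rw [← hcons]; simp
    rw [h0, ht]; exact hj
  · intro h
    rw [DofA]
    simp only [Finset.mem_biUnion, Finset.mem_image, Finset.mem_range]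
    have hpos : 0 < ((A.image (fun a => a 0)).filter
        (fun a1 => Fin.tail δ ∈
          DofA n ((A.filter (fun a => a 0 = a1)).image (fun a => Fin.tail a)))).card :=
      lt_of_le_of_lt (Nat.zero_le _) h
    obtain ⟨a1, ha1⟩ := Finset.card_pos.mp hpos
    rw [Finset.mem_filter] at ha1
    refine ⟨Fin.tail δ, ?_, δ 0, h, Fin.cons_self_tail δ⟩
    obtain ⟨a, haA, ha0⟩ := Finset.mem_image.mp ha1.1
    exact ⟨a1, ⟨a, haA, ha0⟩, ha1.2⟩

end DofALemmas

theorem eval_eval_C {n : ℕ} {R : Type*} [CommSemiring R]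
    (F : Polynomial (MvPolynomial (Fin n) R)) (a1 : R) (t : Fin n → R) :
    MvPolynomial.eval t (Polynomial.eval (MvPolynomial.C a1) F)
      = Polynomial.eval a1 (Polynomial.map (MvPolynomial.eval t) F) := by
  rw [Polynomial.eval_map]
  have h := Polynomial.eval₂_at_apply (p := F) (MvPolynomial.eval t) (MvPolynomial.C a1)
  rw [MvPolynomial.eval_C] at h
  exact h.symm

theorem coeffv_zero {n : ℕ} {R : Type*} [CommSemiring R] (α : Fin n → ℕ) :
    coeffv (0 : MvPolynomial (Fin n) R) α = 0 := by simp [coeffv]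

theorem lemE : ∀ (n : ℕ) (A : Finset (Fin n → k)) (f : MvPolynomial (Fin n) k),
    (∀ a ∈ A, MvPolynomial.eval a f = 0) → ∀ δ : Fin n → ℕ, coeffv f δ ≠ 0 →
    (∀ δ' : Fin n → ℕ, coeffv f δ' ≠ 0 → δ' = δ ∨ lexLt δ' δ) → δ ∉ DofA n A := by
  intro n
  induction n with
  | zero =>
      intro A f hvan δ hδ _ hD
      rw [DofA] at hD
      simp only [Finset.mem_image] at hD
      obtain ⟨a, ha, -⟩ := hD
      have h1 : f = MvPolynomial.C (MvPolynomial.coeff 0 f) := MvPolynomial.eq_C_of_isEmpty f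
      have h2 : coeffv f δ = MvPolynomial.coeff 0 f := by
        rw [coeffv]; congr 1; exact Subsingleton.elim _ _
      have h3 := hvan a ha
      rw [h1, MvPolynomial.eval_C] at h3
      rw [h2, h3] at hδ
      exact hδ rfl
  | succ n ih =>
      intro A f hvan δ hδ hmax hD
      classical
      rw [mem_DofA_succ] at hD
      set δh := Fin.tail δ with hδh
      set δ0 := δ 0 with hδ0
      set S := (A.image (fun a => a 0)).filter
        (fun a1 => δh ∈ DofA n ((A.filter (fun a => a 0 = a1)).image (fun a => Fin.tail a)))
        with hS
      set F := MvPolynomial.finSuccEquiv k n f with hF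
      have hfc : ∀ (j : ℕ) (dh : Fin n → ℕ),
          coeffv f (Fin.cons j dh) = coeffv (F.coeff j) dh := fun j dh => coeffv_cons f j dh
      set q : Polynomial k :=
        ∑ j ∈ F.support, Polynomial.C (coeffv (F.coeff j) δh) * Polynomial.X ^ j with hq
      have hqcoeff : ∀ i, q.coeff i = coeffv (F.coeff i) δh := by
        intro i
        rw [hq, Polynomial.finset_sum_coeff]
        simp only [Polynomial.coeff_C_mul, Polynomial.coeff_X_pow, mul_ite, mul_one, mul_zero]
        rw [Finset.sum_ite_eq]
        by_cases hi : i ∈ F.support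
        · rw [if_pos hi]
        · rw [if_neg hi, Polynomial.notMem_support_iff.mp hi, coeffv_zero]
      have hdeg : q.natDegree ≤ δ0 := by
        rw [Polynomial.natDegree_le_iff_coeff_eq_zero]
        intro N hN
        rw [hqcoeff]
        by_contra hc
        have h2 : coeffv f (Fin.cons N δh) ≠ 0 := by rw [hfc]; exact hc
        rcases hmax _ h2 with heq | hlt
        · have h3 := congrFun heq 0
          simp only [Fin.cons_zero] at h3
          rw [← hδ0] at h3
          omega
        · rw [← Fin.cons_self_tail δ] at hlt
          rcases lexLt_cons_iff.mp hlt with h | ⟨-, h⟩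
          · exact lexLt_irrefl _ h
          · omega
      have hq0 : q.coeff δ0 ≠ 0 := by
        rw [hqcoeff]
        have h4 : coeffv f δ = coeffv (F.coeff δ0) δh := by
          rw [← hfc, hδh, hδ0, Fin.cons_self_tail]
        rw [← h4]
        exact hδ
      have hkey : ∀ (a1 : k) (dh : Fin n → ℕ),
          coeffv (Polynomial.eval (MvPolynomial.C a1) F) dh
            = ∑ j ∈ F.support, coeffv (F.coeff j) dh * a1 ^ j := by
        intro a1 dh
        rw [Polynomial.eval_eq_sum, Polynomial.sum_def, coeffv_sum]
        refine Finset.sum_congr rfl fun j hj => ?_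
        rw [← MvPolynomial.C_pow, mul_comm (F.coeff j), coeffv_C_mul, mul_comm]
      have hqeval : ∀ a1 : k, q.eval a1 = ∑ j ∈ F.support, coeffv (F.coeff j) δh * a1 ^ j := by
        intro a1
        rw [hq, Polynomial.eval_finset_sum]
        exact Finset.sum_congr rfl fun j hj => by
          rw [Polynomial.eval_mul, Polynomial.eval_C, Polynomial.eval_pow, Polynomial.eval_X]
      have hroots : ∀ a1 ∈ S, q.eval a1 = 0 := by
        intro a1 ha1
        rw [hS, Finset.mem_filter] at ha1
        by_contra hne
        set g := Polynomial.eval (MvPolynomial.C a1) F with hg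
        have hgδh : coeffv g δh ≠ 0 := by rw [hg, hkey, ← hqeval]; exact hne
        have hgmax : ∀ dh : Fin n → ℕ, coeffv g dh ≠ 0 → dh = δh ∨ lexLt dh δh := by
          intro dh hdh
          rw [hg, hkey] at hdh
          obtain ⟨j, hj, hterm⟩ := Finset.exists_ne_zero_of_sum_ne_zero hdh
          have h1 : coeffv (F.coeff j) dh ≠ 0 := fun h => hterm (by rw [h, zero_mul])
          have h2 : coeffv f (Fin.cons j dh) ≠ 0 := by rw [hfc]; exact h1
          rcases hmax _ h2 with heq | hlt
          · left
            have h3 := congrArg Fin.tail heq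
            rwa [Fin.tail_cons] at h3
          · rw [← Fin.cons_self_tail δ] at hlt
            rcases lexLt_cons_iff.mp hlt with h | ⟨h, -⟩
            · right; exact h
            · left; exact h
        have hgvan : ∀ t ∈ (A.filter (fun a => a 0 = a1)).image (fun a => Fin.tail a),
            MvPolynomial.eval t g = 0 := by
          intro t ht
          obtain ⟨a, haf, rfl⟩ := Finset.mem_image.mp ht
          rw [Finset.mem_filter] at haf
          have heq : MvPolynomial.eval (Fin.tail a) g = MvPolynomial.eval a f := by
            rw [hg, eval_eval_C]
            conv_rhs => rw [← Fin.cons_self_tail a]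
            rw [MvPolynomial.eval_eq_eval_mv_eval', haf.2, ← hF]
          rw [heq]
          exact hvan a haf.1
        exact ih ((A.filter (fun a => a 0 = a1)).image (fun a => Fin.tail a)) g hgvan
          δh hgδh hgmax ha1.2
      have hzero : q = 0 :=
        Polynomial.eq_zero_of_natDegree_lt_card_of_eval_eq_zero' q S hroots
          (lt_of_le_of_lt hdeg hD)
      rw [hzero, Polynomial.coeff_zero] at hq0
      exact hq0 rfl

theorem lemC (n : ℕ) (A : Finset (Fin n → k)) (f : MvPolynomial (Fin n) k)
    (hsupp : ∀ δ : Fin n → ℕ, coeffv f δ ≠ 0 → δ ∈ DofA n A)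
    (hvan : ∀ a ∈ A, MvPolynomial.eval a f = 0) : f = 0 := by
  by_contra hf
  have hne : (f.support.image (fun m : Fin n →₀ ℕ => (m : Fin n → ℕ))).Nonempty := by
    rw [Finset.image_nonempty, Finset.nonempty_iff_ne_empty]
    simpa [MvPolynomial.support_eq_empty] using hf
  obtain ⟨δ, hδ, hδmax⟩ := exists_lex_max _ hne
  obtain ⟨m, hm, rfl⟩ := Finset.mem_image.mp hδ
  have hc : coeffv f (m : Fin n → ℕ) ≠ 0 := by
    rw [coeffv_coe]; exact MvPolynomial.mem_support_iff.mp hm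
  have hmax : ∀ δ' : Fin n → ℕ, coeffv f δ' ≠ 0 → δ' = (m : Fin n → ℕ) ∨ lexLt δ' m := by
    intro δ' hδ'
    refine hδmax δ' (Finset.mem_image.mpr ⟨Finsupp.equivFunOnFinite.symm δ', ?_, ?_⟩)
    · exact MvPolynomial.mem_support_iff.mpr hδ'
    · exact Finsupp.equivFunOnFinite.apply_symm_apply δ'
  exact lemE n A f hvan _ hc hmax (hsupp _ hc)

theorem lemD : ∀ (n : ℕ) (A : Finset (Fin n → k)) (γ : Fin n → ℕ), γ ∉ DofA n A →
    ∃ f : MvPolynomial (Fin n) k, coeffv f γ = 1 ∧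
      (∀ δ : Fin n → ℕ, coeffv f δ ≠ 0 → δ ≠ γ → lexLt δ γ) ∧
      ∀ a ∈ A, MvPolynomial.eval a f = 0 := by
  intro n
  induction n with
  | zero =>
      intro A γ hγ
      have hA : A = ∅ := by
        rcases A.eq_empty_or_nonempty with h | ⟨a, ha⟩
        · exact h
        · exfalso
          apply hγ
          rw [DofA]
          exact Finset.mem_image.mpr ⟨a, ha, funext fun i => i.elim0⟩
      refine ⟨1, ?_, ?_, ?_⟩
      · rw [coeffv]
        have h0 : (Finsupp.equivFunOnFinite.symm γ : Fin 0 →₀ ℕ) = 0 := Subsingleton.elim _ _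
        rw [h0]
        simp
      · intro δ hδ hne
        exact absurd (funext fun i : Fin 0 => i.elim0 : δ = γ) hne
      · intro a ha
        rw [hA] at ha
        exact absurd ha (Finset.notMem_empty a)
  | succ n ih =>
      intro A γ hγ
      classical
      set γh := Fin.tail γ with hγh
      set γ0 := γ 0 with hγ0def
      set S := (A.image (fun a => a 0)).filter
        (fun a1 => γh ∈ DofA n ((A.filter (fun a => a 0 = a1)).image (fun a => Fin.tail a)))
        with hS
      have hm : S.card ≤ γ0 := by
        by_contra h
        push_neg at h
        exact hγ ((mem_DofA_succ A γ).mpr h)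
      set T := (A.image (fun a => a 0)) \ S with hT
      have hTprop : ∀ b ∈ T,
          γh ∉ DofA n ((A.filter (fun a => a 0 = b)).image (fun a => Fin.tail a)) := by
        intro b hb
        rw [hT, Finset.mem_sdiff] at hb
        intro hmem
        exact hb.2 (Finset.mem_filter.mpr ⟨hb.1, hmem⟩)
      have hgex : ∀ b : k, ∃ gg : MvPolynomial (Fin n) k, b ∈ T →
          (coeffv gg γh = 1 ∧ (∀ δ : Fin n → ℕ, coeffv gg δ ≠ 0 → δ ≠ γh → lexLt δ γh) ∧
           ∀ t ∈ (A.filter (fun a => a 0 = b)).image (fun a => Fin.tail a),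
             MvPolynomial.eval t gg = 0) := by
        intro b
        by_cases hb : b ∈ T
        · obtain ⟨gg, h⟩ :=
            ih ((A.filter (fun a => a 0 = b)).image (fun a => Fin.tail a)) γh (hTprop b hb)
          exact ⟨gg, fun _ => h⟩
        · exact ⟨0, fun h => absurd h hb⟩
      choose g hg using hgex
      set M : MvPolynomial (Fin n) k :=
        MvPolynomial.monomial (Finsupp.equivFunOnFinite.symm γh) 1 with hM
      have hcM : ∀ dh : Fin n → ℕ, coeffv M dh = if γh = dh then 1 else 0 := fun dh =>
        coeffv_monomial γh dh 1
      set P0 : Polynomial k :=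
        Polynomial.X ^ (γ0 - S.card) * ∏ s ∈ S, (Polynomial.X - Polynomial.C s) with hP0
      have hprodmonic : (∏ s ∈ S, (Polynomial.X - Polynomial.C s) : Polynomial k).Monic :=
        Polynomial.monic_prod_of_monic S _ (fun s _ => Polynomial.monic_X_sub_C s)
      have hP0monic : P0.Monic := (Polynomial.monic_X_pow _).mul hprodmonic
      have hP0deg : P0.natDegree = γ0 := by
        rw [hP0, (Polynomial.monic_X_pow _).natDegree_mul hprodmonic,
          Polynomial.natDegree_X_pow,
          Polynomial.natDegree_prod_of_monic _ _ (fun s _ => Polynomial.monic_X_sub_C s)]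
        simp only [Polynomial.natDegree_X_sub_C, Finset.sum_const, smul_eq_mul, mul_one]
        omega
      set L0 : k → Polynomial k := fun b =>
        ∏ c ∈ T.erase b, (Polynomial.C (b - c)⁻¹ * (Polynomial.X - Polynomial.C c)) with hL0
      have hL0eval : ∀ b ∈ T, ∀ a1 ∈ T, (L0 b).eval a1 = if b = a1 then 1 else 0 := by
        intro b hb a1 ha1
        by_cases hba : b = a1
        · subst hba
          rw [if_pos rfl, hL0]
          simp only [Polynomial.eval_prod, Polynomial.eval_mul, Polynomial.eval_C,
            Polynomial.eval_sub, Polynomial.eval_X]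
          refine Finset.prod_eq_one fun c hc => ?_
          have hbc : b ≠ c := (Finset.ne_of_mem_erase hc).symm
          rw [inv_mul_cancel₀ (sub_ne_zero.mpr hbc)]
        · rw [if_neg hba, hL0]
          simp only [Polynomial.eval_prod, Polynomial.eval_mul, Polynomial.eval_C,
            Polynomial.eval_sub, Polynomial.eval_X]
          refine Finset.prod_eq_zero (Finset.mem_erase.mpr ⟨fun h => hba h.symm, ha1⟩) ?_
          rw [sub_self, mul_zero]
      set G : Polynomial (MvPolynomial (Fin n) k) :=
        Polynomial.C M + ∑ b ∈ T, Polynomial.C (g b - M) *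
          (L0 b).map (MvPolynomial.C : k →+* MvPolynomial (Fin n) k) with hG
      set F : Polynomial (MvPolynomial (Fin n) k) :=
        (P0.map (MvPolynomial.C : k →+* MvPolynomial (Fin n) k)) * G with hFdef
      have hFF : MvPolynomial.finSuccEquiv k n ((MvPolynomial.finSuccEquiv k n).symm F) = F :=
        (MvPolynomial.finSuccEquiv k n).apply_symm_apply F
      have hfc : ∀ (j : ℕ) (dh : Fin n → ℕ),
          coeffv ((MvPolynomial.finSuccEquiv k n).symm F) (Fin.cons j dh)
            = coeffv (F.coeff j) dh := by
        intro j dh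
        rw [coeffv_cons, hFF]
      have hG1 : ∀ (i : ℕ) (dh : Fin n → ℕ), ¬ lexLt dh γh →
          coeffv (G.coeff i) dh = if i = 0 ∧ dh = γh then 1 else 0 := by
        intro i dh hnlex
        have hzb : ∀ b ∈ T, coeffv (g b - M) dh = 0 := by
          intro b hb
          rw [coeffv_sub, hcM]
          by_cases hdh : dh = γh
          · subst hdh
            rw [if_pos rfl, (hg b hb).1, sub_self]
          · rw [if_neg (fun h => hdh h.symm), sub_zero]
            by_contra hc
            exact hnlex ((hg b hb).2.1 dh hc hdh)
        have hterm : ∀ b ∈ T,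
            coeffv ((Polynomial.C (g b - M) *
              (L0 b).map (MvPolynomial.C : k →+* MvPolynomial (Fin n) k)).coeff i) dh = 0 := by
          intro b hb
          rw [Polynomial.coeff_C_mul, Polynomial.coeff_map, mul_comm, coeffv_C_mul,
            hzb b hb, mul_zero]
        rw [hG, Polynomial.coeff_add, Polynomial.finset_sum_coeff, coeffv_add, coeffv_sum,
          Finset.sum_eq_zero hterm, add_zero, Polynomial.coeff_C]
        by_cases hi : i = 0
        · subst hi
          rw [if_pos rfl, hcM]
          by_cases hdh : dh = γh
          · subst hdh; simp
          · rw [if_neg (fun h => hdh h.symm), if_neg (fun h => hdh h.2)]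
        · rw [if_neg hi, coeffv_zero, if_neg (fun h => hi h.1)]
      have hF1 : ∀ (j : ℕ) (dh : Fin n → ℕ), ¬ lexLt dh γh →
          coeffv (F.coeff j) dh = if dh = γh then P0.coeff j else 0 := by
        intro j dh hnlex
        rw [hFdef, Polynomial.coeff_mul, coeffv_sum]
        have hterm : ∀ x ∈ Finset.HasAntidiagonal.antidiagonal j,
            coeffv ((P0.map (MvPolynomial.C : k →+* MvPolynomial (Fin n) k)).coeff x.1
              * G.coeff x.2) dh
              = if dh = γh ∧ x.2 = 0 then P0.coeff x.1 else 0 := by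
          intro x hx
          rw [Polynomial.coeff_map, coeffv_C_mul, hG1 x.2 dh hnlex]
          by_cases h2 : x.2 = 0 <;> by_cases hdh : dh = γh <;> simp [h2, hdh]
        rw [Finset.sum_congr rfl hterm]
        by_cases hdh : dh = γh
        · rw [if_pos hdh]
          rw [Finset.sum_eq_single ((j, 0) : ℕ × ℕ)]
          · simp [hdh]
          · intro x hx hne
            rw [Finset.HasAntidiagonal.mem_antidiagonal] at hx
            have hx2 : x.2 ≠ 0 := by
              intro h0
              apply hne
              have : x.1 = j := by omega
              rw [Prod.ext_iff]
              exact ⟨this, h0⟩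
            simp [hx2]
          · intro h
            exact absurd (Finset.HasAntidiagonal.mem_antidiagonal.mpr (by simp)) h
        · simp [hdh]
      have hγcons : Fin.cons γ0 γh = γ := Fin.cons_self_tail γ
      refine ⟨(MvPolynomial.finSuccEquiv k n).symm F, ?_, ?_, ?_⟩
      · rw [← hγcons, hfc, hF1 γ0 γh (lexLt_irrefl γh), if_pos rfl, ← hP0deg]
        exact hP0monic.coeff_natDegree
      · intro δ hδne hδγ
        rw [← Fin.cons_self_tail δ, hfc] at hδne
        by_cases hlex : lexLt (Fin.tail δ) γh
        · rw [← Fin.cons_self_tail δ, ← hγcons]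
          exact lexLt_cons_iff.mpr (Or.inl hlex)
        · rw [hF1 _ _ hlex] at hδne
          by_cases hdh : Fin.tail δ = γh
          · rw [if_pos hdh] at hδne
            have hle : δ 0 ≤ γ0 := by
              by_contra hgt
              push_neg at hgt
              exact hδne (Polynomial.coeff_eq_zero_of_natDegree_lt (by rw [hP0deg]; exact hgt))
            have hne0 : δ 0 ≠ γ0 := by
              intro h
              apply hδγ
              rw [← Fin.cons_self_tail δ, hdh, h, hγcons]
            rw [← Fin.cons_self_tail δ, ← hγcons, hdh]
            exact lexLt_cons_iff.mpr (Or.inr ⟨rfl, by omega⟩)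
          · rw [if_neg hdh] at hδne
            exact absurd rfl hδne
      · intro a ha
        have ht : Fin.tail a ∈ (A.filter (fun x => x 0 = a 0)).image (fun x => Fin.tail x) :=
          Finset.mem_image.mpr ⟨a, Finset.mem_filter.mpr ⟨ha, rfl⟩, rfl⟩
        conv_lhs => rw [← Fin.cons_self_tail a]
        rw [MvPolynomial.eval_eq_eval_mv_eval', hFF, Polynomial.eval_map, hFdef,
          Polynomial.eval₂_mul]
        have hid : (MvPolynomial.eval (Fin.tail a)).comp
            (MvPolynomial.C : k →+* MvPolynomial (Fin n) k) = RingHom.id k :=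
          RingHom.ext fun x => by simp
        have hPeval : Polynomial.eval₂ (MvPolynomial.eval (Fin.tail a)) (a 0)
            (P0.map (MvPolynomial.C : k →+* MvPolynomial (Fin n) k)) = P0.eval (a 0) := by
          rw [Polynomial.eval₂_map, hid]
          rfl
        rw [hPeval]
        by_cases haS : a 0 ∈ S
        · have hz : P0.eval (a 0) = 0 := by
            rw [hP0, Polynomial.eval_mul, Polynomial.eval_prod]
            rw [Finset.prod_eq_zero haS
              (by rw [Polynomial.eval_sub, Polynomial.eval_X, Polynomial.eval_C, sub_self])]
            rw [mul_zero]
          rw [hz, zero_mul]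
        · have haT : a 0 ∈ T := by
            rw [hT, Finset.mem_sdiff]
            exact ⟨Finset.mem_image.mpr ⟨a, ha, rfl⟩, haS⟩
          have hGeval : Polynomial.eval₂ (MvPolynomial.eval (Fin.tail a)) (a 0) G
              = MvPolynomial.eval (Fin.tail a) M +
                ∑ b ∈ T, MvPolynomial.eval (Fin.tail a) (g b - M) *
                  Polynomial.eval (a 0) (L0 b) := by
            rw [hG, Polynomial.eval₂_add, Polynomial.eval₂_C, Polynomial.eval₂_finset_sum]
            congr 1
            refine Finset.sum_congr rfl fun b hb => ?_
            rw [Polynomial.eval₂_mul, Polynomial.eval₂_C, Polynomial.eval₂_map, hid]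
            rfl
          rw [hGeval]
          have hsum : ∑ b ∈ T, MvPolynomial.eval (Fin.tail a) (g b - M) *
              Polynomial.eval (a 0) (L0 b)
              = MvPolynomial.eval (Fin.tail a) (g (a 0) - M) := by
            rw [Finset.sum_eq_single (a 0)]
            · rw [hL0eval (a 0) haT (a 0) haT, if_pos rfl, mul_one]
            · intro b hb hne
              rw [hL0eval b hb (a 0) haT, if_neg hne, mul_zero]
            · intro h
              exact absurd haT h
          rw [hsum]
          have hcollapse : MvPolynomial.eval (Fin.tail a) M +
              MvPolynomial.eval (Fin.tail a) (g (a 0) - M)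
              = MvPolynomial.eval (Fin.tail a) (g (a 0)) := by
            rw [map_sub]
            ring
          rw [hcollapse, (hg (a 0) haT).2.2 (Fin.tail a) ht, mul_zero]

theorem mainEx (n : ℕ) (A : Finset (Fin n → k)) (β : Fin n → ℕ) (hβ : β ∉ DofA n A) :
    ∃ f : MvPolynomial (Fin n) k,
      (coeffv f β = 1 ∧ ∀ γ : Fin n → ℕ, coeffv f γ ≠ 0 → γ ≠ β → lexLt γ β) ∧
      (∀ γ : Fin n → ℕ, coeffv f γ ≠ 0 → γ ≠ β → γ ∈ DofA n A) ∧
      (∀ a ∈ A, MvPolynomial.eval a f = 0) := by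
  classical
  revert hβ
  refine (lexLt_wf n).induction (C := fun β => β ∉ DofA n A →
    ∃ f : MvPolynomial (Fin n) k,
      (coeffv f β = 1 ∧ ∀ γ : Fin n → ℕ, coeffv f γ ≠ 0 → γ ≠ β → lexLt γ β) ∧
      (∀ γ : Fin n → ℕ, coeffv f γ ≠ 0 → γ ≠ β → γ ∈ DofA n A) ∧
      (∀ a ∈ A, MvPolynomial.eval a f = 0)) β ?_
  intro β IH hβ
  obtain ⟨g, hg1, hg2, hg3⟩ := lemD n A β hβ
  set bad : Finset (Fin n →₀ ℕ) := g.support.filter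
    (fun m => (m : Fin n → ℕ) ∉ DofA n A ∧ (m : Fin n → ℕ) ≠ β) with hbad
  have hlt : ∀ m ∈ bad, lexLt (m : Fin n → ℕ) β := by
    intro m hm
    rw [hbad, Finset.mem_filter] at hm
    exact hg2 _ (by rw [coeffv_coe]; exact MvPolynomial.mem_support_iff.mp hm.1) hm.2.2
  have hfm : ∀ m : Fin n →₀ ℕ, ∃ fm : MvPolynomial (Fin n) k, m ∈ bad →
      ((coeffv fm (m : Fin n → ℕ) = 1 ∧
          ∀ γ : Fin n → ℕ, coeffv fm γ ≠ 0 → γ ≠ (m : Fin n → ℕ) → lexLt γ (m : Fin n → ℕ)) ∧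
        (∀ γ : Fin n → ℕ, coeffv fm γ ≠ 0 → γ ≠ (m : Fin n → ℕ) → γ ∈ DofA n A) ∧
        (∀ a ∈ A, MvPolynomial.eval a fm = 0)) := by
    intro m
    by_cases hm : m ∈ bad
    · obtain ⟨fm, h⟩ := IH (m : Fin n → ℕ) (hlt m hm) (Finset.mem_filter.mp hm).2.1
      exact ⟨fm, fun _ => h⟩
    · exact ⟨0, fun h => absurd h hm⟩
  choose fb hfb using hfm
  refine ⟨g - ∑ m ∈ bad, MvPolynomial.C (MvPolynomial.coeff m g) * fb m, ?_, ?_, ?_⟩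
  case refine_3 =>
    intro a ha
    rw [map_sub, map_sum, hg3 a ha]
    rw [Finset.sum_eq_zero (fun m hm => by
      rw [map_mul, MvPolynomial.eval_C, (hfb m hm).2.2 a ha, mul_zero])]
    rw [sub_zero]
  all_goals
    have hcoeff : ∀ δ : Fin n → ℕ,
        coeffv (g - ∑ m ∈ bad, MvPolynomial.C (MvPolynomial.coeff m g) * fb m) δ
          = coeffv g δ - ∑ m ∈ bad, MvPolynomial.coeff m g * coeffv (fb m) δ := by
      intro δ
      rw [coeffv_sub, coeffv_sum]
      exact congrArg _ (Finset.sum_congr rfl fun m _ => coeffv_C_mul _ _ _)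
  case refine_1 =>
    constructor
    · rw [hcoeff, hg1]
      rw [Finset.sum_eq_zero (fun m hm => ?_), sub_zero]
      have hmβ : β ≠ (m : Fin n → ℕ) := Ne.symm (Finset.mem_filter.mp hm).2.2
      have : coeffv (fb m) β = 0 := by
        by_contra hc
        exact hβ ((hfb m hm).2.1 β hc hmβ)
      rw [this, mul_zero]
    · intro γ hγ hγβ
      rw [hcoeff] at hγ
      by_cases hgγ : coeffv g γ ≠ 0
      · exact hg2 γ hgγ hγβ
      · push_neg at hgγ
        rw [hgγ, zero_sub, neg_ne_zero] at hγ
        obtain ⟨m, hm, hterm⟩ := Finset.exists_ne_zero_of_sum_ne_zero hγ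
        have hfbγ : coeffv (fb m) γ ≠ 0 := fun h => hterm (by rw [h, mul_zero])
        by_cases hγm : γ = (m : Fin n → ℕ)
        · rw [hγm]; exact hlt m hm
        · exact lexLt_trans ((hfb m hm).1.2 γ hfbγ hγm) (hlt m hm)
  case refine_2 =>
    intro γ hγ hγβ
    by_contra hγD
    rw [hcoeff] at hγ
    have hsum : ∑ m ∈ bad, MvPolynomial.coeff m g * coeffv (fb m) γ
        = if Finsupp.equivFunOnFinite.symm γ ∈ bad
            then MvPolynomial.coeff (Finsupp.equivFunOnFinite.symm γ) g else 0 := by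
      by_cases hmem : Finsupp.equivFunOnFinite.symm γ ∈ bad
      · rw [if_pos hmem, Finset.sum_eq_single (Finsupp.equivFunOnFinite.symm γ)]
        · have h1 : coeffv (fb (Finsupp.equivFunOnFinite.symm γ)) γ = 1 := (hfb _ hmem).1.1
          rw [h1, mul_one]
        · intro m hm hne
          have hγm : γ ≠ (m : Fin n → ℕ) := by
            intro h
            exact hne (by rw [h, Finsupp.equivFunOnFinite_symm_coe])
          have : coeffv (fb m) γ = 0 := by
            by_contra hc
            exact hγD ((hfb m hm).2.1 γ hc hγm)
          rw [this, mul_zero]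
        · intro h; exact absurd hmem h
      · rw [if_neg hmem]
        refine Finset.sum_eq_zero fun m hm => ?_
        have hγm : γ ≠ (m : Fin n → ℕ) := by
          intro h
          exact hmem (by rw [h, Finsupp.equivFunOnFinite_symm_coe]; exact hm)
        have : coeffv (fb m) γ = 0 := by
          by_contra hc
          exact hγD ((hfb m hm).2.1 γ hc hγm)
        rw [this, mul_zero]
    rw [hsum] at hγ
    by_cases hmem : Finsupp.equivFunOnFinite.symm γ ∈ bad
    · rw [if_pos hmem] at hγ
      exact hγ (sub_eq_zero.mpr rfl)
    · rw [if_neg hmem, sub_zero] at hγ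
      have : Finsupp.equivFunOnFinite.symm γ ∈ bad := by
        rw [hbad, Finset.mem_filter]
        refine ⟨MvPolynomial.mem_support_iff.mpr hγ, ?_, ?_⟩
        · exact hγD
        · exact hγβ
      exact hmem this

/-- Corollary to Theorem 1: for every `β ∈ ℕ₀ⁿ − D(A)` there is a *unique* polynomial
`f_β ∈ k[X₁,…,Xₙ]` such that (i) its lexicographic leading term is `X^β` (coefficient
`1`, all other terms lexicographically lower), (ii) the exponents of all lower terms
lie in `D(A)`, and (iii) `f_β(a) = 0` for all `a ∈ A`. -/
theorem stmt_14 (n : ℕ) (A : Finset (Fin n → k)) (β : Fin n → ℕ)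
    (hβ : β ∉ DofA n A) :
    ∃! f : MvPolynomial (Fin n) k,
      (coeffv f β = 1 ∧ ∀ γ : Fin n → ℕ, coeffv f γ ≠ 0 → γ ≠ β → lexLt γ β) ∧
      (∀ γ : Fin n → ℕ, coeffv f γ ≠ 0 → γ ≠ β → γ ∈ DofA n A) ∧
      (∀ a ∈ A, MvPolynomial.eval a f = 0) := by
  obtain ⟨f, hf1, hf2, hf3⟩ := mainEx n A β hβ
  refine ⟨f, ⟨hf1, hf2, hf3⟩, ?_⟩
  rintro f' ⟨⟨hc1, _⟩, hc2, hc3⟩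
  have hzero : f' - f = 0 := by
    refine lemC n A (f' - f) (fun δ hδ => ?_) (fun a ha => ?_)
    · rw [coeffv_sub] at hδ
      have hδβ : δ ≠ β := by
        rintro rfl
        rw [hc1, hf1.1, sub_self] at hδ
        exact hδ rfl
      by_cases h' : coeffv f' δ ≠ 0
      · exact hc2 δ h' hδβ
      · push_neg at h'
        rw [h', zero_sub, neg_ne_zero] at hδ
        exact hf2 δ hδ hδβ
    · rw [map_sub, hc3 a ha, hf3 a ha, sub_self]
  exact sub_eq_zero.mp hzero
end
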